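/- Every sequence of C(k+l-4, k-2) + 1 points in the plane in general position contains a k-cup or an l-cap. -/
import Mathlib


/-- The 2×2 determinant of two planar vectors. -/
def det2 (u v : ℝ × ℝ) : ℝ := u.1 * v.2 - u.2 * v.1

/-- The first `k` terms of `c` form a cup: increasing x-coordinates and every
consecutive triple makes a left turn (graph of a convex function). -/
def IsCupSeq (c : ℕ → ℝ × ℝ) (k : ℕ) : Prop :=
  (∀ i j, i < j → j < k → (c i).1 < (c j).1) ∧
  ∀ i, i + 2 < k → 0 < det2 (c (i + 1) - c i) (c (i + 2) - c i)

/-- The first `l` terms of `c` form a cap: increasing x-coordinates and every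
consecutive triple makes a right turn (graph of a concave function). -/
def IsCapSeq (c : ℕ → ℝ × ℝ) (l : ℕ) : Prop :=
  (∀ i j, i < j → j < l → (c i).1 < (c j).1) ∧
  ∀ i, i + 2 < l → det2 (c (i + 1) - c i) (c (i + 2) - c i) < 0

namespace CupsCaps

/-- Monotone enumeration of a finite set of naturals. -/
noncomputable def enum (E : Finset ℕ) : ℕ → ℕ :=
  fun i => if h : i < E.card then E.orderEmbOfFin rfl ⟨i, h⟩ else 0

lemma enum_mem {E : Finset ℕ} {i : ℕ} (h : i < E.card) : enum E i ∈ E := by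
  simp only [enum, dif_pos h]
  exact Finset.orderEmbOfFin_mem E rfl _

lemma enum_lt {E : Finset ℕ} {i j : ℕ} (hij : i < j) (hj : j < E.card) :
    enum E i < enum E j := by
  have hi : i < E.card := hij.trans hj
  simp only [enum, dif_pos hi, dif_pos hj]
  exact (E.orderEmbOfFin rfl).strictMono (show (⟨i, hi⟩ : Fin E.card) < ⟨j, hj⟩ from hij)

lemma xmono {P : ℕ → ℝ × ℝ} {N : ℕ}
    (hx : ∀ i j, i < j → j < N → (P i).1 < (P j).1)
    {s : ℕ → ℕ} {m : ℕ} (h1 : ∀ i, i < m → s i < N)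
    (h2 : ∀ i j, i < j → j < m → s i < s j) :
    ∀ i j, i < j → j < m → (P (s i)).1 < (P (s j)).1 :=
  fun i j hij hj => hx _ _ (h2 i j hij hj) (h1 j hj)

lemma sub_hx {P : ℕ → ℝ × ℝ} {N : ℕ}
    (hx : ∀ i j, i < j → j < N → (P i).1 < (P j).1)
    {G : Finset ℕ} (hG : ∀ x ∈ G, x < N) :
    ∀ i j, i < j → j < G.card → (P (enum G i)).1 < (P (enum G j)).1 :=
  fun i j hij hj => hx _ _ (enum_lt hij hj) (hG _ (enum_mem hj))

lemma sub_hgen {P : ℕ → ℝ × ℝ} {N : ℕ}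
    (hgen : ∀ i j m, i < j → j < m → m < N → det2 (P j - P i) (P m - P i) ≠ 0)
    {G : Finset ℕ} (hG : ∀ x ∈ G, x < N) :
    ∀ i j m, i < j → j < m → m < G.card →
      det2 (P (enum G j) - P (enum G i)) (P (enum G m) - P (enum G i)) ≠ 0 :=
  fun i j m hij hjm hm =>
    hgen _ _ _ (enum_lt hij (hjm.trans hm)) (enum_lt hjm hm) (hG _ (enum_mem hm))

lemma small_cup {P : ℕ → ℝ × ℝ} {N : ℕ}
    (hx : ∀ i j, i < j → j < N → (P i).1 < (P j).1)
    {k : ℕ} (hk : k ≤ 2) (hkN : k ≤ N) :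
    ∃ s : ℕ → ℕ, (∀ i, i < k → s i < N) ∧ (∀ i j, i < j → j < k → s i < s j) ∧
      IsCupSeq (fun i => P (s i)) k := by
  refine ⟨id, fun i hi => hi.trans_le hkN, fun i j hij _ => hij, ?_, ?_⟩
  · exact fun i j hij hj => hx i j hij (hj.trans_le hkN)
  · intro i hi; omega

lemma small_cap {P : ℕ → ℝ × ℝ} {N : ℕ}
    (hx : ∀ i j, i < j → j < N → (P i).1 < (P j).1)
    {l : ℕ} (hl : l ≤ 2) (hlN : l ≤ N) :
    ∃ s : ℕ → ℕ, (∀ i, i < l → s i < N) ∧ (∀ i j, i < j → j < l → s i < s j) ∧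
      IsCapSeq (fun i => P (s i)) l := by
  refine ⟨id, fun i hi => hi.trans_le hlN, fun i j hij _ => hij, ?_, ?_⟩
  · exact fun i j hij hj => hx i j hij (hj.trans_le hlN)
  · intro i hi; omega

lemma main (n : ℕ) : ∀ (k l : ℕ) (P : ℕ → ℝ × ℝ) (N : ℕ), k + l ≤ n →
    Nat.choose (k + l - 4) (k - 2) + 1 ≤ N →
    (∀ i j, i < j → j < N → (P i).1 < (P j).1) →
    (∀ i j m, i < j → j < m → m < N → det2 (P j - P i) (P m - P i) ≠ 0) →
    (∃ s : ℕ → ℕ, (∀ i, i < k → s i < N) ∧ (∀ i j, i < j → j < k → s i < s j) ∧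
      IsCupSeq (fun i => P (s i)) k) ∨
    (∃ s : ℕ → ℕ, (∀ i, i < l → s i < N) ∧ (∀ i j, i < j → j < l → s i < s j) ∧
      IsCapSeq (fun i => P (s i)) l) := by
  induction n with
  | zero =>
    intro k l P N hn hN hx hgen
    have hk : k = 0 := by omega
    subst hk
    exact Or.inl (small_cup hx (by omega) (by omega))
  | succ n ih =>
    intro k l P N hn hN hx hgen
    -- small k
    by_cases hk2 : k ≤ 2
    · refine Or.inl (small_cup hx hk2 ?_)
      rcases Nat.lt_or_ge k 2 with h | h
      · omega
      · have hk : k = 2 := by omega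
        subst hk
        have h0 : (2 : ℕ) - 2 = 0 := rfl
        rw [h0, Nat.choose_zero_right] at hN
        omega
    by_cases hl2 : l ≤ 2
    · refine Or.inr (small_cap hx hl2 ?_)
      rcases Nat.lt_or_ge l 2 with h | h
      · omega
      · have hl : l = 2 := by omega
        subst hl
        have h0 : k + 2 - 4 = k - 2 := by omega
        rw [h0, Nat.choose_self] at hN
        omega
    -- main case : k = k'+3, l = l'+3
    obtain ⟨k', rfl⟩ : ∃ k', k = k' + 3 := ⟨k - 3, by omega⟩
    obtain ⟨l', rfl⟩ : ∃ l', l = l' + 3 := ⟨l - 3, by omega⟩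
    clear hk2 hl2
    have e1 : k' + 3 + (l' + 3) - 4 = k' + l' + 2 := by omega
    have e2 : k' + 3 - 2 = k' + 1 := by omega
    rw [e1, e2] at hN
    have pascal : Nat.choose (k' + l' + 2) (k' + 1)
        = Nat.choose (k' + l' + 1) k' + Nat.choose (k' + l' + 1) (k' + 1) :=
      Nat.choose_succ_succ (k' + l' + 1) k'
    rw [pascal] at hN
    by_contra hcon
    obtain ⟨noCup, noCap⟩ := not_or.mp hcon
    classical
    set E : Finset ℕ := (Finset.range N).filter (fun p => ∃ d : ℕ → ℕ,
      (∀ i, i < k' + 2 → d i < N) ∧ (∀ i j, i < j → j < k' + 2 → d i < d j) ∧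
      IsCupSeq (fun i => P (d i)) (k' + 2) ∧ d (k' + 1) = p) with hEdef
    set F : Finset ℕ := Finset.range N \ E with hFdef
    have hEsub : ∀ x ∈ E, x < N := fun x hxE =>
      Finset.mem_range.mp (Finset.mem_filter.mp hxE).1
    have hFsub : ∀ x ∈ F, x < N := fun x hxF =>
      Finset.mem_range.mp (Finset.mem_sdiff.mp hxF).1
    -- Step 1 : F.card ≤ C(k'+l'+1, k')
    have hFcard : F.card ≤ Nat.choose (k' + l' + 1) k' := by
      by_contra hc
      push_neg at hc
      have hch : Nat.choose (k' + 2 + (l' + 3) - 4) (k' + 2 - 2) + 1 ≤ F.card := by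
        have e3 : k' + 2 + (l' + 3) - 4 = k' + l' + 1 := by omega
        have e4 : k' + 2 - 2 = k' := by omega
        rw [e3, e4]; omega
      obtain cup | cap := ih (k' + 2) (l' + 3) (fun i => P (enum F i)) F.card
        (by omega) hch (sub_hx hx hFsub) (sub_hgen hgen hFsub)
      · obtain ⟨t, ht1, ht2, ht3⟩ := cup
        have hpF : enum F (t (k' + 1)) ∈ F := enum_mem (ht1 _ (by omega))
        have hpE : enum F (t (k' + 1)) ∈ E := by
          rw [hEdef]
          refine Finset.mem_filter.mpr ⟨Finset.mem_range.mpr (hFsub _ hpF),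
            ⟨fun i => enum F (t i), ?_, ?_, ?_, rfl⟩⟩
          · exact fun i hi => hFsub _ (enum_mem (ht1 i hi))
          · exact fun i j hij hj => enum_lt (ht2 i j hij hj) (ht1 j hj)
          · exact ht3
        exact (Finset.mem_sdiff.mp hpF).2 hpE
      · obtain ⟨t, ht1, ht2, ht3⟩ := cap
        exact noCap ⟨fun i => enum F (t i),
          fun i hi => hFsub _ (enum_mem (ht1 i hi)),
          fun i j hij hj => enum_lt (ht2 i j hij hj) (ht1 j hj), ht3⟩
    -- Step 2 : E.card ≥ C(k'+l'+1, k'+1) + 1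
    have hsubE : E ⊆ Finset.range N := Finset.filter_subset _ _
    have hcard1 : F.card = N - E.card := by
      rw [hFdef, Finset.card_sdiff_of_subset hsubE, Finset.card_range]
    have hcard2 : E.card ≤ N := by
      have := Finset.card_le_card hsubE
      simpa using this
    have hEcard : Nat.choose (k' + l' + 1) (k' + 1) + 1 ≤ E.card := by omega
    -- Step 3 : apply IH to E
    have hch2 : Nat.choose (k' + 3 + (l' + 2) - 4) (k' + 3 - 2) + 1 ≤ E.card := by
      have e3 : k' + 3 + (l' + 2) - 4 = k' + l' + 1 := by omega
      rw [e3, e2]; exact hEcard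
    obtain cup | cap := ih (k' + 3) (l' + 2) (fun i => P (enum E i)) E.card
      (by omega) hch2 (sub_hx hx hEsub) (sub_hgen hgen hEsub)
    · obtain ⟨t, ht1, ht2, ht3⟩ := cup
      exact noCup ⟨fun i => enum E (t i),
        fun i hi => hEsub _ (enum_mem (ht1 i hi)),
        fun i j hij hj => enum_lt (ht2 i j hij hj) (ht1 j hj), ht3⟩
    · obtain ⟨t, ht1, ht2, ht3⟩ := cap
      set s : ℕ → ℕ := fun i => enum E (t i) with hsdef
      have hs1 : ∀ i, i < l' + 2 → s i < N :=
        fun i hi => hEsub _ (enum_mem (ht1 i hi))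
      have hs2 : ∀ i j, i < j → j < l' + 2 → s i < s j :=
        fun i j hij hj => enum_lt (ht2 i j hij hj) (ht1 j hj)
      have hs3 : IsCapSeq (fun i => P (s i)) (l' + 2) := ht3
      have hs0E : s 0 ∈ E := enum_mem (ht1 0 (by omega))
      obtain ⟨-, d, hd1, hd2, hd3, hd4⟩ := Finset.mem_filter.mp hs0E
      have hab : d k' < s 0 := hd4 ▸ hd2 k' (k' + 1) (by omega) (by omega)
      have hbc : s 0 < s 1 := hs2 0 1 (by omega) (by omega)
      have haN : d k' < N := hd1 k' (by omega)
      have hcN : s 1 < N := hs1 1 (by omega)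
      have hdet : det2 (P (s 0) - P (d k')) (P (s 1) - P (d k')) ≠ 0 :=
        hgen _ _ _ hab hbc hcN
      rcases hdet.lt_or_gt with hneg | hpos
      · -- right turn : build an (l'+3)-cap  d k', s 0, s 1, ..., s (l'+1)
        refine noCap ⟨fun i => match i with | 0 => d k' | (j+1) => s j, ?_, ?_, ?_, ?_⟩
        · intro i hi
          match i with
          | 0 => exact haN
          | (j+1) => exact hs1 j (by omega)
        · intro i j hij hj
          match i, j with
          | 0, (j+1) =>
            rcases Nat.eq_or_lt_of_le (show 0 ≤ j by omega) with h | h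
            · rw [← h]; exact hab
            · exact hab.trans (hs2 0 j h (by omega))
          | (i+1), (j+1) => exact hs2 i j (by omega) (by omega)
        · refine xmono hx ?_ ?_
          · intro i hi
            match i with
            | 0 => exact haN
            | (j+1) => exact hs1 j (by omega)
          · intro i j hij hj
            match i, j with
            | 0, (j+1) =>
              rcases Nat.eq_or_lt_of_le (show 0 ≤ j by omega) with h | h
              · rw [← h]; exact hab
              · exact hab.trans (hs2 0 j h (by omega))
            | (i+1), (j+1) => exact hs2 i j (by omega) (by omega)
        · intro i hi
          match i with
          | 0 => exact hneg
          | (m+1) => exact hs3.2 m (by omega)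
      · -- left turn : build a (k'+3)-cup  d 0, ..., d (k'+1) = s 0, s 1
        refine noCup ⟨fun i => if i < k' + 2 then d i else s 1, ?_, ?_, ?_, ?_⟩
        · intro i hi
          by_cases h : i < k' + 2
          · simpa [h] using hd1 i h
          · simpa [h] using hcN
        · intro i j hij hj
          by_cases hj2 : j < k' + 2
          · have hi2 : i < k' + 2 := hij.trans hj2
            simpa [hi2, hj2] using hd2 i j hij hj2
          · have hi2 : i < k' + 2 := by omega
            have hle : d i ≤ d (k' + 1) := by
              rcases Nat.lt_or_ge i (k' + 1) with h | h
              · exact (hd2 i (k' + 1) h (by omega)).le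
              · have : i = k' + 1 := by omega
                rw [this]
            simp only [if_pos hi2, if_neg hj2]
            calc d i ≤ d (k' + 1) := hle
              _ = s 0 := hd4
              _ < s 1 := hbc
        · refine xmono hx ?_ ?_
          · intro i hi
            by_cases h : i < k' + 2
            · simpa [h] using hd1 i h
            · simpa [h] using hcN
          · intro i j hij hj
            by_cases hj2 : j < k' + 2
            · have hi2 : i < k' + 2 := hij.trans hj2
              simpa [hi2, hj2] using hd2 i j hij hj2
            · have hi2 : i < k' + 2 := by omega
              have hle : d i ≤ d (k' + 1) := by
                rcases Nat.lt_or_ge i (k' + 1) with h | h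
                · exact (hd2 i (k' + 1) h (by omega)).le
                · have : i = k' + 1 := by omega
                  rw [this]
              simp only [if_pos hi2, if_neg hj2]
              calc d i ≤ d (k' + 1) := hle
                _ = s 0 := hd4
                _ < s 1 := hbc
        · intro i hi
          by_cases h : i + 2 < k' + 2
          · have h1 : i + 1 < k' + 2 := by omega
            have h0 : i < k' + 2 := by omega
            simp only [if_pos h, if_pos h1, if_pos h0]
            exact hd3.2 i h
          · have hik : i = k' := by omega
            subst hik
            simp only [if_pos (show i < i + 2 by omega),
              if_pos (show i + 1 < i + 2 by omega),
              if_neg (show ¬ (i + 2 < i + 2) by omega), hd4]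
            exact hpos

end CupsCaps

theorem cups_caps (k l : ℕ) (P : ℕ → ℝ × ℝ)
    (N : ℕ) (hN : N = Nat.choose (k + l - 4) (k - 2) + 1)
    (hx : ∀ i j, i < j → j < N → (P i).1 < (P j).1)
    (hgen : ∀ i j m, i < j → j < m → m < N →
      det2 (P j - P i) (P m - P i) ≠ 0) :
    (∃ s : ℕ → ℕ, (∀ i, i < k → s i < N) ∧ (∀ i j, i < j → j < k → s i < s j) ∧
      IsCupSeq (fun i => P (s i)) k) ∨
    (∃ s : ℕ → ℕ, (∀ i, i < l → s i < N) ∧ (∀ i j, i < j → j < l → s i < s j) ∧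
      IsCapSeq (fun i => P (s i)) l) := by
  subst hN
  exact CupsCaps.main (k + l) k l P _ le_rfl le_rfl hx hgen
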